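/- The function τ ↦ log(τ · cot τ) is strictly decreasing and concave on the interval (0, π/2). -/

import Mathlib

open Real Set

private lemma aux_hasDerivAt {τ : ℝ} (hτ : τ ∈ Set.Ioo 0 (π / 2)) :
    HasDerivAt (fun τ : ℝ => Real.log (τ * Real.cos τ / Real.sin τ))
      (1 / τ - 1 / (Real.sin τ * Real.cos τ)) τ := by
  obtain ⟨h0, h2⟩ := hτ
  have hs : 0 < Real.sin τ := Real.sin_pos_of_pos_of_lt_pi h0 (h2.trans (by linarith [Real.pi_pos]))
  have hc : 0 < Real.cos τ := Real.cos_pos_of_mem_Ioo ⟨by linarith [Real.pi_pos], h2⟩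
  have hg : HasDerivAt (fun τ : ℝ => τ * Real.cos τ / Real.sin τ)
      (((1 * Real.cos τ + τ * (-Real.sin τ)) * Real.sin τ - τ * Real.cos τ * Real.cos τ)
        / Real.sin τ ^ 2) τ := by
    exact ((hasDerivAt_id τ).mul (Real.hasDerivAt_cos τ)).div (Real.hasDerivAt_sin τ) hs.ne'
  have hgpos : 0 < τ * Real.cos τ / Real.sin τ := by positivity
  have := hg.log hgpos.ne'
  convert this using 1
  have hpyth := Real.sin_sq_add_cos_sq τ
  field_simp
  ring_nf
  linear_combination τ * hpyth

private lemma aux_hasDerivAt2 {τ : ℝ} (hτ : τ ∈ Set.Ioo 0 (π / 2)) :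
    HasDerivAt (fun τ : ℝ => 1 / τ - 1 / (Real.sin τ * Real.cos τ))
      (-(1 / τ ^ 2) + (Real.cos τ ^ 2 - Real.sin τ ^ 2) / (Real.sin τ * Real.cos τ) ^ 2) τ := by
  obtain ⟨h0, h2⟩ := hτ
  have hs : 0 < Real.sin τ := Real.sin_pos_of_pos_of_lt_pi h0 (h2.trans (by linarith [Real.pi_pos]))
  have hc : 0 < Real.cos τ := Real.cos_pos_of_mem_Ioo ⟨by linarith [Real.pi_pos], h2⟩
  have h1 : HasDerivAt (fun τ : ℝ => 1 / τ) ((0 * τ - 1 * 1) / τ ^ 2) τ :=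
    (hasDerivAt_const τ 1).div (hasDerivAt_id τ) h0.ne'
  have hsc : HasDerivAt (fun τ : ℝ => Real.sin τ * Real.cos τ)
      (Real.cos τ * Real.cos τ + Real.sin τ * (-Real.sin τ)) τ :=
    (Real.hasDerivAt_sin τ).mul (Real.hasDerivAt_cos τ)
  have hscne : Real.sin τ * Real.cos τ ≠ 0 := by positivity
  have h2' : HasDerivAt (fun τ : ℝ => 1 / (Real.sin τ * Real.cos τ))
      ((0 * (Real.sin τ * Real.cos τ) - 1 * (Real.cos τ * Real.cos τ + Real.sin τ * (-Real.sin τ)))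
        / (Real.sin τ * Real.cos τ) ^ 2) τ :=
    (hasDerivAt_const τ 1).div hsc hscne
  refine (h1.sub h2').congr_deriv ?_
  field_simp
  ring

theorem log_tau_cot_strictAnti_concave :
    StrictAntiOn (fun τ : ℝ => Real.log (τ * Real.cos τ / Real.sin τ)) (Set.Ioo 0 (π / 2)) ∧
    ConcaveOn ℝ (Set.Ioo 0 (π / 2)) (fun τ : ℝ => Real.log (τ * Real.cos τ / Real.sin τ)) := by
  set f : ℝ → ℝ := fun τ => Real.log (τ * Real.cos τ / Real.sin τ) with hf
  have hconv : Convex ℝ (Set.Ioo (0:ℝ) (π / 2)) := convex_Ioo _ _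
  have hcont : ContinuousOn f (Set.Ioo 0 (π / 2)) := fun x hx =>
    (aux_hasDerivAt hx).continuousAt.continuousWithinAt
  have hint : interior (Set.Ioo (0:ℝ) (π / 2)) = Set.Ioo 0 (π / 2) := interior_Ioo
  have hderiv : ∀ x ∈ Set.Ioo (0:ℝ) (π / 2),
      deriv f x = 1 / x - 1 / (Real.sin x * Real.cos x) := fun x hx =>
    (aux_hasDerivAt hx).deriv
  constructor
  · apply strictAntiOn_of_deriv_neg hconv hcont
    rw [hint]
    intro x hx
    rw [hderiv x hx]
    obtain ⟨h0, h2⟩ := hx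
    have hs : 0 < Real.sin x :=
      Real.sin_pos_of_pos_of_lt_pi h0 (h2.trans (by linarith [Real.pi_pos]))
    have hc : 0 < Real.cos x := Real.cos_pos_of_mem_Ioo ⟨by linarith [Real.pi_pos], h2⟩
    have hlt : Real.sin x * Real.cos x < x := by
      have := Real.sin_lt (show 0 < 2 * x by linarith)
      rw [Real.sin_two_mul] at this
      linarith
    have hscpos : 0 < Real.sin x * Real.cos x := by positivity
    rw [sub_neg]
    exact one_div_lt_one_div_of_lt hscpos hlt
  · refine (strictConcaveOn_of_deriv2_neg hconv hcont ?_).concaveOn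
    rw [hint]
    intro x hx
    have hdd : deriv (deriv f) x =
        -(1 / x ^ 2) + (Real.cos x ^ 2 - Real.sin x ^ 2) / (Real.sin x * Real.cos x) ^ 2 := by
      have hev : deriv f =ᶠ[nhds x] fun τ => 1 / τ - 1 / (Real.sin τ * Real.cos τ) := by
        filter_upwards [isOpen_Ioo.mem_nhds hx] with y hy using hderiv y hy
      rw [Filter.EventuallyEq.deriv_eq hev]
      exact (aux_hasDerivAt2 hx).deriv
    simp only [Function.iterate_succ, Function.iterate_zero, Function.comp_apply, id]
    rw [hdd]
    obtain ⟨h0, h2⟩ := hx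
    have hs : 0 < Real.sin x :=
      Real.sin_pos_of_pos_of_lt_pi h0 (h2.trans (by linarith [Real.pi_pos]))
    have hc : 0 < Real.cos x := Real.cos_pos_of_mem_Ioo ⟨by linarith [Real.pi_pos], h2⟩
    have htan : x < Real.tan x := Real.lt_tan h0 h2
    have hxc : x * Real.cos x < Real.sin x := by
      rw [Real.tan_eq_sin_div_cos] at htan
      calc x * Real.cos x < Real.sin x / Real.cos x * Real.cos x := by
            exact mul_lt_mul_of_pos_right htan hc
        _ = Real.sin x := by field_simp
    have hpyth := Real.sin_sq_add_cos_sq x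
    have hA : x ^ 2 * Real.cos x ^ 2 < Real.sin x ^ 2 := by
      nlinarith [mul_pos (sub_pos.mpr hxc) (by positivity : (0:ℝ) < Real.sin x + x * Real.cos x)]
    have hB : x ^ 2 * Real.cos x ^ 2 * Real.cos x ^ 2 < Real.sin x ^ 2 * Real.cos x ^ 2 :=
      mul_lt_mul_of_pos_right hA (by positivity)
    have hC : x ^ 2 * (Real.cos x ^ 2 - Real.sin x ^ 2) ≤
        x ^ 2 * Real.cos x ^ 2 * Real.cos x ^ 2 := by
      nlinarith [sq_nonneg (Real.cos x ^ 2 - 1), sq_nonneg x]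
    have key : x ^ 2 * (Real.cos x ^ 2 - Real.sin x ^ 2) < (Real.sin x * Real.cos x) ^ 2 := by
      nlinarith [hB, hC]
    have hx2 : (0:ℝ) < x ^ 2 := by positivity
    have hsc2 : (0:ℝ) < (Real.sin x * Real.cos x) ^ 2 := by positivity
    rw [neg_add_lt_iff_lt_add, add_zero, div_lt_div_iff₀ hsc2 hx2]
    linarith [key]
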